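/- For every real c ≥ 0, every R ∈ ℝ, and every integer N ≥ 1, one has | ∑_{k=N+1}^∞ cos(2πkR)/(c + 4π²k²) − (1/(4π²N)) · η_{N,R} | ≤ c / (48 π⁴ N³), where η_{N,R} = N ∑_{k=N+1}^∞ cos(2πkR)/k². (Lemma 3, eq. (bound_vN), with c playing the role of k_R².) -/

import Mathlib

open Real

set_option maxHeartbeats 1000000 in
/-- For every `c ≥ 0`, every `R ∈ ℝ`, and every integer `N ≥ 1`,
`|∑_{k=N+1}^∞ cos(2πkR)/(c + 4π²k²) − η_{N,R}/(4π²N)| ≤ c/(48π⁴N³)`,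
where `η_{N,R} = N ∑_{k=N+1}^∞ cos(2πkR)/k²`. (Lemma 3, eq. (bound_vN).) -/
theorem tail_sum_cos_shifted_quadratic (c : ℝ) (hc : 0 ≤ c) (R : ℝ) (N : ℕ) (hN : 1 ≤ N) :
    |(∑' k : ℕ, Real.cos (2 * π * ((N : ℝ) + 1 + (k : ℝ)) * R) /
          (c + 4 * π ^ 2 * ((N : ℝ) + 1 + (k : ℝ)) ^ 2)) -
        (1 / (4 * π ^ 2 * (N : ℝ))) *
          ((N : ℝ) * ∑' k : ℕ,
            Real.cos (2 * π * ((N : ℝ) + 1 + (k : ℝ)) * R) / ((N : ℝ) + 1 + (k : ℝ)) ^ 2)| ≤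
      c / (48 * π ^ 4 * (N : ℝ) ^ 3) := by
  have hπ : (0:ℝ) < π := Real.pi_pos
  have hπ2 : (1:ℝ) ≤ 4 * π ^ 2 := by nlinarith [Real.pi_gt_three]
  have hN1 : (1:ℝ) ≤ (N:ℝ) := by exact_mod_cast hN
  have hNpos : (0:ℝ) < (N:ℝ) := by linarith
  set m : ℕ → ℝ := fun k => (N:ℝ) + 1 + k with hm
  have hm1 : ∀ k, (1:ℝ) ≤ m k := fun k => by
    have : (0:ℝ) ≤ (k:ℝ) := Nat.cast_nonneg k
    simp only [hm]; linarith
  have hmpos : ∀ k, (0:ℝ) < m k := fun k => lt_of_lt_of_le one_pos (hm1 k)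
  have hden1 : ∀ k, (0:ℝ) < 4 * π ^ 2 * (m k) ^ 2 := fun k => by positivity
  have hden2 : ∀ k, (0:ℝ) < c + 4 * π ^ 2 * (m k) ^ 2 := fun k =>
    lt_of_lt_of_le (hden1 k) (by linarith)
  -- telescoping function
  set u : ℕ → ℝ := fun k => 1 / (3 * ((N:ℝ) + k) ^ 3) with hu
  have hNk : ∀ k : ℕ, (1:ℝ) ≤ (N:ℝ) + k := fun k => by
    have : (0:ℝ) ≤ (k:ℝ) := Nat.cast_nonneg k
    linarith
  have hu_succ : ∀ k : ℕ, u (k + 1) = 1 / (3 * (m k) ^ 3) := fun k => by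
    simp only [hu, hm]; push_cast; ring_nf
  -- pointwise telescoping bound : 1/(m k)^4 ≤ u k - u (k+1)
  have htel : ∀ k : ℕ, 1 / (m k) ^ 4 ≤ u k - u (k + 1) := by
    intro k
    rw [hu_succ k]
    simp only [hu, hm]
    have ha : (1:ℝ) ≤ (N:ℝ) + k := hNk k
    set a : ℝ := (N:ℝ) + k with ha2
    have hma : (N:ℝ) + 1 + k = a + 1 := by rw [ha2]; ring
    rw [hma]
    rw [div_sub_div _ _ (by positivity) (by positivity : (3:ℝ) * (a+1)^3 ≠ 0),
      div_le_div_iff₀ (by positivity) (by positivity)]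
    have h0 : 3*a^3 ≤ (3*a^2+3*a+1)*(a+1) := by nlinarith [sq_nonneg a]
    have h1 : (0:ℝ) ≤ (a+1)^3 := by positivity
    nlinarith [mul_le_mul_of_nonneg_right h0 h1]
  -- telescoping sum
  have huton : Filter.Tendsto u Filter.atTop (nhds 0) := by
    have hshift : Filter.Tendsto (fun k : ℕ => (N:ℝ) + k) Filter.atTop Filter.atTop :=
      Filter.tendsto_atTop_add_const_left _ _ tendsto_natCast_atTop_atTop
    have hpow : Filter.Tendsto (fun k : ℕ => ((N:ℝ) + k) ^ 3) Filter.atTop Filter.atTop :=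
      (Filter.tendsto_pow_atTop (by norm_num : (3:ℕ) ≠ 0)).comp hshift
    have h1 : Filter.Tendsto (fun k : ℕ => 3 * ((N:ℝ) + k) ^ 3) Filter.atTop Filter.atTop :=
      hpow.const_mul_atTop (by norm_num)
    have h2 := h1.inv_tendsto_atTop
    exact h2.congr fun k => (one_div _).symm
  have htelsum : HasSum (fun k => u k - u (k + 1)) (u 0) := by
    have hnonneg : ∀ k, 0 ≤ u k - u (k + 1) := fun k =>
      le_trans (by positivity) (htel k)
    rw [hasSum_iff_tendsto_nat_of_nonneg hnonneg]
    have : ∀ n : ℕ, ∑ i ∈ Finset.range n, (u i - u (i + 1)) = u 0 - u n := by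
      intro n
      induction n with
      | zero => simp
      | succ n ih => rw [Finset.sum_range_succ, ih]; ring
    simp only [this]
    simpa using (tendsto_const_nhds.sub huton)
  -- summability of 1/m^2 and 1/m^4
  have hsum_pow : ∀ p : ℕ, 1 < p → Summable (fun k : ℕ => 1 / (m k) ^ p) := by
    intro p hp
    have h0 : Summable (fun n : ℕ => 1 / (n:ℝ) ^ p) :=
      Real.summable_one_div_nat_pow.mpr hp
    have h1 : Summable (fun k : ℕ => 1 / ((k + (N + 1) : ℕ) : ℝ) ^ p) :=
      (summable_nat_add_iff (N + 1)).mpr h0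
    refine h1.congr fun k => ?_
    simp only [hm]; push_cast; ring_nf
  have hsum2 : Summable (fun k : ℕ => 1 / (m k) ^ 2) := hsum_pow 2 one_lt_two
  -- the two series
  set f1 : ℕ → ℝ := fun k => Real.cos (2 * π * m k * R) / (c + 4 * π ^ 2 * (m k) ^ 2) with hf1
  set f2 : ℕ → ℝ := fun k => Real.cos (2 * π * m k * R) / (4 * π ^ 2 * (m k) ^ 2) with hf2
  have habs1 : ∀ k, |f1 k| ≤ 1 / (m k) ^ 2 := by
    intro k
    rw [hf1, abs_div, abs_of_pos (hden2 k)]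
    apply div_le_div₀ (by positivity) (Real.abs_cos_le_one _) (by positivity)
    nlinarith [sq_nonneg (m k), hm1 k, hmpos k]
  have habs2 : ∀ k, |f2 k| ≤ 1 / (m k) ^ 2 := by
    intro k
    rw [hf2, abs_div, abs_of_pos (hden1 k)]
    apply div_le_div₀ (by positivity) (Real.abs_cos_le_one _) (by positivity)
    nlinarith [sq_nonneg (m k), hm1 k, hmpos k]
  have hS1 : Summable f1 :=
    Summable.of_abs (hsum2.of_nonneg_of_le (fun k => abs_nonneg _) habs1)
  have hS2 : Summable f2 :=
    Summable.of_abs (hsum2.of_nonneg_of_le (fun k => abs_nonneg _) habs2)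
  -- rewrite second term as tsum f2
  have hkey : (1 / (4 * π ^ 2 * (N:ℝ))) *
      ((N:ℝ) * ∑' k : ℕ, Real.cos (2 * π * m k * R) / (m k) ^ 2) = ∑' k, f2 k := by
    have h1 : ∀ k : ℕ, f2 k = (1 / (4 * π ^ 2)) * (Real.cos (2 * π * m k * R) / (m k) ^ 2) := by
      intro k
      rw [hf2]
      first | (field_simp; ring) | field_simp
    rw [tsum_congr h1, tsum_mul_left]
    first | (field_simp; ring) | field_simp
    exact tsum_congr fun k => by ring
  rw [hkey, ← Summable.tsum_sub hS1 hS2]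
  -- pointwise bound on the difference
  have hbound : ∀ k, |f1 k - f2 k| ≤ (c / (16 * π ^ 4)) * (u k - u (k + 1)) := by
    intro k
    have hd1 := hden1 k
    have hd2 := hden2 k
    have heq : f1 k - f2 k =
        Real.cos (2 * π * m k * R) * (-c) / ((c + 4 * π ^ 2 * (m k) ^ 2) * (4 * π ^ 2 * (m k) ^ 2)) := by
      rw [hf1, hf2]
      beta_reduce
      rw [div_sub_div _ _ hd2.ne' hd1.ne']
      ring
    rw [heq, abs_div, abs_mul, abs_neg, abs_of_nonneg hc, abs_of_pos (mul_pos hd2 hd1)]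
    have h1 : |Real.cos (2 * π * m k * R)| * c ≤ 1 * c :=
      mul_le_mul_of_nonneg_right (Real.abs_cos_le_one _) hc
    have h2 : |Real.cos (2 * π * m k * R)| * c /
        ((c + 4 * π ^ 2 * (m k) ^ 2) * (4 * π ^ 2 * (m k) ^ 2)) ≤
        c / (16 * π ^ 4 * (m k) ^ 4) := by
      apply div_le_div₀ (by positivity) (by linarith) (by positivity)
      nlinarith [sq_nonneg (m k), hmpos k, sq_nonneg (π * m k)]
    refine h2.trans ?_
    have h3 : c / (16 * π ^ 4 * (m k) ^ 4) = (c / (16 * π ^ 4)) * (1 / (m k) ^ 4) := by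
      field_simp
    rw [h3]
    exact mul_le_mul_of_nonneg_left (htel k) (by positivity)
  -- assemble
  have hsumT : Summable (fun k => (c / (16 * π ^ 4)) * (u k - u (k + 1))) :=
    (htelsum.summable).mul_left _
  have habsS : Summable (fun k : ℕ => |f1 k - f2 k|) :=
    hsumT.of_nonneg_of_le (fun k => abs_nonneg _) hbound
  have hfinal : |∑' k, (f1 k - f2 k)| ≤ ∑' k, (c / (16 * π ^ 4)) * (u k - u (k + 1)) := by
    calc |∑' k, (f1 k - f2 k)| ≤ ∑' k, |f1 k - f2 k| := by
          have h := norm_tsum_le_tsum_norm (f := fun k : ℕ => f1 k - f2 k)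
            (by simpa only [Real.norm_eq_abs] using habsS)
          simpa only [Real.norm_eq_abs] using h
      _ ≤ ∑' k, (c / (16 * π ^ 4)) * (u k - u (k + 1)) :=
          Summable.tsum_le_tsum hbound habsS hsumT
  refine hfinal.trans ?_
  rw [tsum_mul_left, htelsum.tsum_eq]
  have hu0 : u 0 = 1 / (3 * (N:ℝ) ^ 3) := by simp [hu]
  rw [hu0]
  rw [div_mul_div_comm, div_le_div_iff₀ (by positivity) (by positivity)]
  ring_nf
  nlinarith [pow_pos hNpos 3, pow_pos hπ 4, mul_pos (pow_pos hNpos 3) (pow_pos hπ 4)]
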